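/- There is an absolute constant C > 0 with the following property. Let Λ be a nonempty finite set, a > 0, and let g : Λ × Λ → ℝ be a symmetric positive semidefinite kernel (i.e. Σ_{x,y∈Λ} f(x) f(y) g(x,y) ≥ 0 for every f : Λ → ℝ) satisfying a^4 · max_{x∈Λ} Σ_{y∈Λ} |g(x,y)| ≤ G. Let n ≥ 2, let α_1,...,α_n be real numbers with |α_j| ≤ ᾱ for all j, and for x_1,...,x_n ∈ Λ let φ_n(x_1,...,x_n) denote the Ursell function of the n×n positive semidefinite matrix with entries α_j α_{j'} g(x_j, x_{j'}), where the Ursell functions φ(Y) of a symmetric positive semidefinite matrix (g_{jj'}) are defined by φ({j}) = e^{-g_{jj}} and, for |Y| ≥ 2, by e^{-Σ_{j,j'∈Y} g_{jj'}} = Σ_π ∏_{B∈π} φ(B), the sum running over partitions π of Y. Then max_{x_1∈Λ} a^{4(n-1)} Σ_{x_2,...,x_n∈Λ} |φ_n(x_1,...,x_n)| ≤ C^n · n! · (ᾱ^2 G)^{n-1}. -/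

import Mathlib

/-- `P` is a partition of the finite set `Y` into nonempty blocks. -/
def IsPartitionOf {n : ℕ} (P : Finset (Finset (Fin n))) (Y : Finset (Fin n)) : Prop :=
  (∀ B ∈ P, B.Nonempty) ∧
  ((P : Set (Finset (Fin n))).PairwiseDisjoint id) ∧
  P.sup id = Y


open scoped Classical

namespace UrsellProofAux

variable {n : ℕ}

/-- Positive semidefiniteness of a matrix on `Fin n`. -/
def Pos (v : Fin n → Fin n → ℝ) : Prop :=
  ∀ t : Fin n → ℝ, 0 ≤ ∑ i : Fin n, ∑ j : Fin n, t i * t j * v i j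

def Symm (v : Fin n → Fin n → ℝ) : Prop := ∀ i j, v i j = v j i

/-- Interpolation scaling the couplings between `A` and its complement by `s`. -/
noncomputable def sig (A : Finset (Fin n)) (s : ℝ) (v : Fin n → Fin n → ℝ) :
    Fin n → Fin n → ℝ :=
  fun i j => if (i ∈ A ↔ j ∈ A) then v i j else s * v i j

lemma sig_one (A : Finset (Fin n)) (v : Fin n → Fin n → ℝ) : sig A 1 v = v := by
  funext i j; simp [sig]

lemma sig_symm {v : Fin n → Fin n → ℝ} (hv : Symm v) (A : Finset (Fin n)) (s : ℝ) :
    Symm (sig A s v) := by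
  intro i j; simp only [sig, hv i j]
  by_cases h1 : i ∈ A <;> by_cases h2 : j ∈ A <;> simp [h1, h2]

lemma sig_continuous (A : Finset (Fin n)) :
    Continuous (fun p : (Fin n → Fin n → ℝ) × ℝ => sig A p.2 p.1) := by
  apply continuous_pi; intro i; apply continuous_pi; intro j
  simp only [sig]
  by_cases h : (i ∈ A ↔ j ∈ A)
  · simp only [h, if_true]
    exact (continuous_apply_apply i j).comp continuous_fst
  · simp only [h, if_false]
    exact continuous_snd.mul ((continuous_apply_apply i j).comp continuous_fst)

/-- The Brydges–Battle–Federbush kernel, defined by interpolation recursion. -/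
noncomputable def K (A B : Finset (Fin n)) (v : Fin n → Fin n → ℝ) : ℝ :=
  if h : B ⊆ A then Real.exp (-(∑ i ∈ A, ∑ j ∈ A, v i j))
  else ∑ i ∈ A, ∑ j ∈ (B \ A).attach,
    (-2 * v i j.1) * ∫ s in (0:ℝ)..1, K (insert j.1 A) B (sig A s v)
termination_by (B \ A).card
decreasing_by
  have hj' : j.1 ∈ B \ A := j.2
  have he : B \ insert j.1 A = (B \ A).erase j.1 := by
    ext k; simp only [Finset.mem_sdiff, Finset.mem_erase, Finset.mem_insert]; tauto
  rw [he]
  exact Finset.card_erase_lt_of_mem hj'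

lemma K_of_subset {A B : Finset (Fin n)} (h : B ⊆ A) (v : Fin n → Fin n → ℝ) :
    K A B v = Real.exp (-(∑ i ∈ A, ∑ j ∈ A, v i j)) := by
  rw [K]; simp [h]

lemma K_of_not_subset {A B : Finset (Fin n)} (h : ¬ B ⊆ A) (v : Fin n → Fin n → ℝ) :
    K A B v = ∑ i ∈ A, ∑ j ∈ B \ A,
      (-2 * v i j) * ∫ s in (0:ℝ)..1, K (insert j A) B (sig A s v) := by
  rw [K, dif_neg h]
  exact Finset.sum_congr rfl fun i _ =>
    Finset.sum_attach (B \ A) (fun j => -2 * v i j * ∫ s in (0:ℝ)..1, K (insert j A) B (sig A s v))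

noncomputable def rho (Y : Finset (Fin n)) (v : Fin n → Fin n → ℝ) : ℝ :=
  Real.exp (-(∑ i ∈ Y, ∑ j ∈ Y, v i j))

lemma sum_sig_split {A Y : Finset (Fin n)} (hAY : A ⊆ Y) {v : Fin n → Fin n → ℝ}
    (hv : Symm v) (s : ℝ) :
    ∑ i ∈ Y, ∑ j ∈ Y, sig A s v i j =
      ((∑ i ∈ A, ∑ j ∈ A, v i j) + (∑ i ∈ Y \ A, ∑ j ∈ Y \ A, v i j)) +
        s * (2 * ∑ i ∈ A, ∑ j ∈ Y \ A, v i j) := by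
  have inner : ∀ i : Fin n, ∑ j ∈ Y, sig A s v i j =
      ∑ j ∈ Y \ A, sig A s v i j + ∑ j ∈ A, sig A s v i j :=
    fun i => (Finset.sum_sdiff hAY).symm
  rw [← Finset.sum_sdiff hAY]
  simp only [inner]
  rw [Finset.sum_add_distrib, Finset.sum_add_distrib]
  have e1 : ∑ i ∈ A, ∑ j ∈ A, sig A s v i j = ∑ i ∈ A, ∑ j ∈ A, v i j := by
    apply Finset.sum_congr rfl; intro i hi; apply Finset.sum_congr rfl; intro j hj
    simp [sig, hi, hj]
  have e2 : ∑ i ∈ Y \ A, ∑ j ∈ Y \ A, sig A s v i j = ∑ i ∈ Y \ A, ∑ j ∈ Y \ A, v i j := by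
    apply Finset.sum_congr rfl; intro i hi; apply Finset.sum_congr rfl; intro j hj
    simp [sig, (Finset.mem_sdiff.mp hi).2, (Finset.mem_sdiff.mp hj).2]
  have e3 : ∑ i ∈ A, ∑ j ∈ Y \ A, sig A s v i j = s * ∑ i ∈ A, ∑ j ∈ Y \ A, v i j := by
    rw [Finset.mul_sum]
    apply Finset.sum_congr rfl; intro i hi
    rw [Finset.mul_sum]
    apply Finset.sum_congr rfl; intro j hj
    have hj' : j ∉ A := (Finset.mem_sdiff.mp hj).2
    simp [sig, hi, hj']
  have e4 : ∑ i ∈ Y \ A, ∑ j ∈ A, sig A s v i j = s * ∑ i ∈ A, ∑ j ∈ Y \ A, v i j := by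
    have : ∑ i ∈ Y \ A, ∑ j ∈ A, sig A s v i j = ∑ j ∈ A, ∑ i ∈ Y \ A, sig A s v i j :=
      Finset.sum_comm
    rw [this, Finset.mul_sum]
    apply Finset.sum_congr rfl; intro j hj
    rw [Finset.mul_sum]
    apply Finset.sum_congr rfl; intro i hi
    have hi' : i ∉ A := (Finset.mem_sdiff.mp hi).2
    simp only [sig, hv i j]
    simp [hi', hj]
  rw [e1, e2, e3, e4]; ring

lemma rho_sig_of_disjoint {A Y' : Finset (Fin n)} (hd : Disjoint Y' A) (s : ℝ)
    (v : Fin n → Fin n → ℝ) : rho Y' (sig A s v) = rho Y' v := by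
  unfold rho
  congr 2
  apply Finset.sum_congr rfl; intro i hi; apply Finset.sum_congr rfl; intro j hj
  have hiA : i ∉ A := Finset.disjoint_left.mp hd hi
  have hjA : j ∉ A := Finset.disjoint_left.mp hd hj
  simp [sig, hiA, hjA]

end UrsellProofAux

namespace UrsellProofAux

variable {n : ℕ}

lemma K_continuous_aux : ∀ q : ℕ, ∀ A B : Finset (Fin n), (B \ A).card = q →
    Continuous (fun v : Fin n → Fin n → ℝ => K A B v) := by
  intro q
  induction q using Nat.strong_induction_on with
  | _ q IH =>
    intro A B hq
    by_cases h : B ⊆ A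
    · simp_rw [K_of_subset h]
      exact Real.continuous_exp.comp (Continuous.neg
        (continuous_finset_sum _ fun i _ => continuous_finset_sum _ fun j _ =>
          continuous_apply_apply i j))
    · simp_rw [K_of_not_subset h]
      apply continuous_finset_sum _ fun i _ => continuous_finset_sum _ fun j hj => ?_
      have hj' : j ∈ B \ A := hj
      have hcard : (B \ insert j A).card < q := by
        have he : B \ insert j A = (B \ A).erase j := by
          ext k; simp only [Finset.mem_sdiff, Finset.mem_erase, Finset.mem_insert]; tauto
        rw [← hq, he]
        exact Finset.card_erase_lt_of_mem hj'
      have hInt : Continuous fun v : Fin n → Fin n → ℝ =>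
          ∫ s in (0:ℝ)..1, K (insert j A) B (sig A s v) := by
        apply intervalIntegral.continuous_parametric_intervalIntegral_of_continuous'
        show Continuous (Function.uncurry fun (v : Fin n → Fin n → ℝ) (s : ℝ) =>
          K (insert j A) B (sig A s v))
        exact (IH _ hcard (insert j A) B rfl).comp (sig_continuous A)
      exact (continuous_const.mul (continuous_apply_apply i j)).mul hInt

lemma K_continuous (A B : Finset (Fin n)) :
    Continuous (fun v : Fin n → Fin n → ℝ => K A B v) :=
  K_continuous_aux _ A B rfl

lemma K_cont_in_s (A A' B : Finset (Fin n)) (v : Fin n → Fin n → ℝ) :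
    Continuous (fun s : ℝ => K A' B (sig A s v)) :=
  (K_continuous A' B).comp ((sig_continuous A).comp (Continuous.prodMk_right v))

end UrsellProofAux

namespace UrsellProofAux
variable {n : ℕ}

lemma sdiff_insert_erase (A B : Finset (Fin n)) (j : Fin n) :
    B \ insert j A = (B \ A).erase j := by
  ext k; simp only [Finset.mem_sdiff, Finset.mem_erase, Finset.mem_insert]; tauto

lemma G_identity : ∀ q : ℕ, ∀ A Y : Finset (Fin n), A.Nonempty → A ⊆ Y → (Y \ A).card = q →
    ∀ v : Fin n → Fin n → ℝ, Symm v →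
    rho Y v = ∑ B ∈ Y.powerset.filter (fun B => A ⊆ B), K A B v * rho (Y \ B) v := by
  intro q
  induction q using Nat.strong_induction_on with
  | _ q IH =>
  intro A Y hAne hAY hq v hv
  by_cases hYA : Y ⊆ A
  · have hEq : Y = A := subset_antisymm hYA hAY
    subst hEq
    have hfil : Y.powerset.filter (fun B => Y ⊆ B) = {Y} := by
      ext B
      simp only [Finset.mem_filter, Finset.mem_powerset, Finset.mem_singleton]
      constructor
      · rintro ⟨h1, h2⟩; exact subset_antisymm h1 h2
      · rintro rfl; exact ⟨Finset.Subset.refl _, Finset.Subset.refl _⟩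
    rw [hfil, Finset.sum_singleton, K_of_subset (Finset.Subset.refl _), Finset.sdiff_self]
    simp [rho]
  · -- main case
    set c : ℝ := (∑ i ∈ A, ∑ j ∈ A, v i j) + (∑ i ∈ Y \ A, ∑ j ∈ Y \ A, v i j) with hc
    set L : ℝ := 2 * ∑ i ∈ A, ∑ j ∈ Y \ A, v i j with hL
    set E : ℝ → ℝ := fun s => Real.exp (-(c + s * L)) with hE
    have hjfacts : ∀ j ∈ Y \ A, (insert j A).Nonempty ∧ insert j A ⊆ Y ∧
        (Y \ insert j A).card < q := by
      intro j hj
      refine ⟨Finset.insert_nonempty _ _, ?_, ?_⟩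
      · exact Finset.insert_subset (Finset.mem_sdiff.mp hj).1 hAY
      · rw [sdiff_insert_erase, ← hq]
        exact Finset.card_erase_lt_of_mem hj
    have hstepb : ∀ s : ℝ, ∀ j ∈ Y \ A, E s =
        ∑ B ∈ Y.powerset.filter (fun B => insert j A ⊆ B),
          K (insert j A) B (sig A s v) * rho (Y \ B) v := by
      intro s j hj
      obtain ⟨h1, h2, h3⟩ := hjfacts j hj
      have hIH := IH _ h3 (insert j A) Y h1 h2 rfl (sig A s v) (sig_symm hv A s)
      have hrhoY : rho Y (sig A s v) = E s := by
        unfold rho; rw [sum_sig_split hAY hv s]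
      rw [hrhoY] at hIH
      rw [hIH]
      apply Finset.sum_congr rfl
      intro B hB
      have hAB : insert j A ⊆ B := (Finset.mem_filter.mp hB).2
      have hd : Disjoint (Y \ B) A := by
        have h5 : Disjoint (Y \ B) B := Finset.sdiff_disjoint
        exact h5.mono_right (Finset.Subset.trans (Finset.subset_insert j A) hAB)
      rw [rho_sig_of_disjoint hd]
    have hderiv : ∀ s ∈ Set.uIcc (0:ℝ) 1, HasDerivAt E (-L * E s) s := by
      intro s _
      have h1 : HasDerivAt (fun s : ℝ => -(c + s * L)) (-L) s := by
        have h := (((hasDerivAt_id s).mul_const L).const_add c).neg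
        rw [one_mul] at h
        exact h
      have := h1.exp
      simpa [hE, mul_comm] using this
    have hFTC : ∫ s in (0:ℝ)..1, (-L * E s) = E 1 - E 0 := by
      apply intervalIntegral.integral_eq_sub_of_hasDerivAt hderiv
      apply Continuous.intervalIntegrable
      exact continuous_const.mul (Real.continuous_exp.comp
        ((continuous_const.add ((continuous_id).mul continuous_const)).neg))
    have hE1 : E 1 = rho Y v := by
      unfold rho
      rw [show (∑ i ∈ Y, ∑ j ∈ Y, v i j) = ∑ i ∈ Y, ∑ j ∈ Y, sig A 1 v i j by
        rw [sig_one], sum_sig_split hAY hv 1]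
    have hE0 : E 0 = K A A v * rho (Y \ A) v := by
      rw [K_of_subset (Finset.Subset.refl A)]
      show Real.exp (-(c + 0 * L)) = _
      unfold rho
      rw [hc, zero_mul, add_zero, neg_add, Real.exp_add]
    have hinteg : ∀ s : ℝ, -L * E s = ∑ i ∈ A, ∑ j ∈ Y \ A,
        (-2 * v i j) * ∑ B ∈ Y.powerset.filter (fun B => insert j A ⊆ B),
          K (insert j A) B (sig A s v) * rho (Y \ B) v := by
      intro s
      have h1 : ∑ i ∈ A, ∑ j ∈ Y \ A, (-2 * v i j) * E s = -L * E s := by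
        have e1 : ∀ i ∈ A, ∑ j ∈ Y \ A, (-2 * v i j) * E s
            = (∑ j ∈ Y \ A, (-2 * v i j)) * E s := fun i _ => (Finset.sum_mul _ _ _).symm
        rw [Finset.sum_congr rfl e1, ← Finset.sum_mul]
        congr 1
        have : ∑ i ∈ A, ∑ j ∈ Y \ A, (-2 * v i j)
            = -2 * ∑ i ∈ A, ∑ j ∈ Y \ A, v i j := by
          rw [Finset.mul_sum]
          exact Finset.sum_congr rfl fun i _ => by rw [Finset.mul_sum]
        rw [this, hL]; ring
      rw [← h1]
      apply Finset.sum_congr rfl; intro i _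
      apply Finset.sum_congr rfl; intro j hj
      rw [← hstepb s j hj]
    -- integrate hinteg over [0,1]
    have hcontB : ∀ (j : Fin n) (B : Finset (Fin n)), Continuous fun s : ℝ =>
        K (insert j A) B (sig A s v) * rho (Y \ B) v :=
      fun j B => (K_cont_in_s A (insert j A) B v).mul continuous_const
    have hcontTerm : ∀ i (j : Fin n), Continuous fun s : ℝ =>
        (-2 * v i j) * ∑ B ∈ Y.powerset.filter (fun B => insert j A ⊆ B),
          K (insert j A) B (sig A s v) * rho (Y \ B) v := by
      intro i j
      exact continuous_const.mul (continuous_finset_sum _ fun B _ => hcontB j B)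
    have hint2 : ∫ s in (0:ℝ)..1, (-L * E s)
        = ∑ i ∈ A, ∑ j ∈ Y \ A, (-2 * v i j) *
            ∑ B ∈ Y.powerset.filter (fun B => insert j A ⊆ B),
              (∫ s in (0:ℝ)..1, K (insert j A) B (sig A s v)) * rho (Y \ B) v := by
      rw [intervalIntegral.integral_congr (g := fun s => ∑ i ∈ A, ∑ j ∈ Y \ A,
        (-2 * v i j) * ∑ B ∈ Y.powerset.filter (fun B => insert j A ⊆ B),
          K (insert j A) B (sig A s v) * rho (Y \ B) v) (fun s _ => hinteg s)]
      rw [intervalIntegral.integral_finset_sum (fun i _ => Continuous.intervalIntegrable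
        (continuous_finset_sum _ fun j _ => hcontTerm i j) _ _)]
      apply Finset.sum_congr rfl; intro i _
      rw [intervalIntegral.integral_finset_sum (fun j _ => Continuous.intervalIntegrable
        (hcontTerm i j) _ _)]
      apply Finset.sum_congr rfl; intro j hj
      rw [intervalIntegral.integral_const_mul]
      congr 1
      rw [intervalIntegral.integral_finset_sum (fun B _ => Continuous.intervalIntegrable
        (hcontB j B) _ _)]
      exact Finset.sum_congr rfl fun B _ => intervalIntegral.integral_mul_const _ _
    -- reorganize the triple sum
    have hswap : ∑ i ∈ A, ∑ j ∈ Y \ A, (-2 * v i j) *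
            ∑ B ∈ Y.powerset.filter (fun B => insert j A ⊆ B),
              (∫ s in (0:ℝ)..1, K (insert j A) B (sig A s v)) * rho (Y \ B) v
        = ∑ B ∈ (Y.powerset.filter (fun B => A ⊆ B)).erase A, K A B v * rho (Y \ B) v := by
      have step1 : ∀ i ∈ A, ∑ j ∈ Y \ A, (-2 * v i j) *
            ∑ B ∈ Y.powerset.filter (fun B => insert j A ⊆ B),
              (∫ s in (0:ℝ)..1, K (insert j A) B (sig A s v)) * rho (Y \ B) v
          = ∑ j ∈ Y \ A, ∑ B ∈ Y.powerset.filter (fun B => insert j A ⊆ B),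
              ((-2 * v i j) * (∫ s in (0:ℝ)..1, K (insert j A) B (sig A s v))) *
                rho (Y \ B) v := by
        intro i _
        apply Finset.sum_congr rfl; intro j _
        rw [Finset.mul_sum]
        exact Finset.sum_congr rfl fun B _ => by ring
      rw [Finset.sum_congr rfl step1, Finset.sum_comm]
      have step2 : ∀ j ∈ Y \ A, ∑ i ∈ A,
            ∑ B ∈ Y.powerset.filter (fun B => insert j A ⊆ B),
              ((-2 * v i j) * (∫ s in (0:ℝ)..1, K (insert j A) B (sig A s v))) *
                rho (Y \ B) v
          = ∑ B ∈ Y.powerset.filter (fun B => insert j A ⊆ B), ∑ i ∈ A,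
              ((-2 * v i j) * (∫ s in (0:ℝ)..1, K (insert j A) B (sig A s v))) *
                rho (Y \ B) v := fun j _ => Finset.sum_comm
      rw [Finset.sum_congr rfl step2]
      have hcomm : ∀ (f : Fin n → Finset (Fin n) → ℝ),
          ∑ j ∈ Y \ A, ∑ B ∈ Y.powerset.filter (fun B => insert j A ⊆ B), f j B
          = ∑ B ∈ (Y.powerset.filter (fun B => A ⊆ B)).erase A, ∑ j ∈ B \ A, f j B := by
        intro f
        apply Finset.sum_comm'
        intro j B
        simp only [Finset.mem_sdiff, Finset.mem_filter, Finset.mem_powerset, Finset.mem_erase]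
        constructor
        · rintro ⟨⟨hjY, hjA⟩, hBY, hjB⟩
          have hjB' : j ∈ B := hjB (Finset.mem_insert_self j A)
          have hAB : A ⊆ B := Finset.Subset.trans (Finset.subset_insert j A) hjB
          refine ⟨⟨hjB', hjA⟩, ⟨?_, hBY, hAB⟩⟩
          intro hBA; subst hBA; exact hjA hjB'
        · rintro ⟨⟨hjB, hjA⟩, hBA, hBY, hAB⟩
          exact ⟨⟨hBY hjB, hjA⟩, hBY, Finset.insert_subset hjB hAB⟩
      rw [hcomm (fun j B => ∑ i ∈ A,
        ((-2 * v i j) * (∫ s in (0:ℝ)..1, K (insert j A) B (sig A s v))) * rho (Y \ B) v)]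
      apply Finset.sum_congr rfl
      intro B hB
      obtain ⟨hBA, hBmem⟩ := Finset.mem_erase.mp hB
      obtain ⟨hBY, hAB⟩ := Finset.mem_filter.mp hBmem
      rw [Finset.mem_powerset] at hBY
      have hnsub : ¬ B ⊆ A := fun h => hBA (subset_antisymm h hAB)
      rw [K_of_not_subset hnsub, Finset.sum_mul, Finset.sum_comm]
      apply Finset.sum_congr rfl; intro j _
      rw [Finset.sum_mul]
    -- assemble
    have hsum := hFTC
    rw [hint2, hE1, hE0] at hsum
    rw [hswap] at hsum
    have : rho Y v = K A A v * rho (Y \ A) v +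
        ∑ B ∈ (Y.powerset.filter (fun B => A ⊆ B)).erase A, K A B v * rho (Y \ B) v := by
      linarith
    rw [this]
    exact Finset.add_sum_erase _ (fun B => K A B v * rho (Y \ B) v) (Finset.mem_filter.mpr
      ⟨Finset.mem_powerset.mpr hAY, Finset.Subset.refl A⟩)

end UrsellProofAux

namespace UrsellProofAux
variable {n : ℕ}

noncomputable def phiHat (v : Fin n → Fin n → ℝ) (B : Finset (Fin n)) : ℝ :=
  if h : B.Nonempty then K {B.min' h} B v else 1

lemma block_subset {P : Finset (Finset (Fin n))} {S B : Finset (Fin n)}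
    (hP : IsPartitionOf P S) (hB : B ∈ P) : B ⊆ S := by
  rw [← hP.2.2]; exact Finset.le_sup (f := id) hB

lemma exists_unique_block {P : Finset (Finset (Fin n))} {S : Finset (Fin n)}
    (hP : IsPartitionOf P S) {r : Fin n} (hr : r ∈ S) :
    ∃! B, B ∈ P ∧ r ∈ B := by
  have h0 : r ∈ P.sup id := hP.2.2 ▸ hr
  rw [Finset.mem_sup] at h0
  obtain ⟨B, hBP, hrB⟩ := h0
  refine ⟨B, ⟨hBP, hrB⟩, ?_⟩
  rintro B' ⟨hB'P, hrB'⟩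
  by_contra hne
  exact (Finset.disjoint_left.mp (hP.2.1 hB'P hBP hne)) hrB' hrB

lemma isPartition_insert {P' : Finset (Finset (Fin n))} {S B : Finset (Fin n)}
    (hB : B ⊆ S) (hBne : B.Nonempty) (hP' : IsPartitionOf P' (S \ B)) :
    IsPartitionOf (insert B P') S := by
  have hblk : ∀ B' ∈ P', B' ⊆ S \ B := fun B' h => block_subset hP' h
  have hdisj : ∀ B' ∈ P', Disjoint B B' := fun B' h =>
    Finset.disjoint_of_subset_right (hblk B' h) Finset.sdiff_disjoint.symm
  refine ⟨?_, ?_, ?_⟩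
  · intro B' hB'
    rcases Finset.mem_insert.mp hB' with rfl | h
    · exact hBne
    · exact hP'.1 _ h
  · rw [Finset.coe_insert]
    exact Set.PairwiseDisjoint.insert hP'.2.1 (fun B' hB' _ => hdisj B' hB')
  · rw [Finset.sup_insert, hP'.2.2]
    show B ∪ (S \ B) = S
    exact Finset.union_sdiff_of_subset hB

lemma isPartition_erase {P : Finset (Finset (Fin n))} {S B : Finset (Fin n)}
    (hP : IsPartitionOf P S) (hB : B ∈ P) :
    IsPartitionOf (P.erase B) (S \ B) := by
  refine ⟨fun B' h => hP.1 _ (Finset.mem_of_mem_erase h), ?_, ?_⟩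
  · exact hP.2.1.subset (by simp [Finset.erase_subset])
  · apply le_antisymm
    · apply Finset.sup_le
      intro B' hB'
      obtain ⟨hne, hB'P⟩ := Finset.mem_erase.mp hB'
      exact Finset.subset_sdiff.mpr ⟨block_subset hP hB'P, hP.2.1 hB'P hB hne⟩
    · intro x hx
      obtain ⟨hxS, hxB⟩ := Finset.mem_sdiff.mp hx
      have h0 : x ∈ P.sup id := hP.2.2 ▸ hxS
      rw [Finset.mem_sup] at h0
      obtain ⟨B', hB'P, hxB'⟩ := h0
      have hne : B' ≠ B := fun h => hxB (h ▸ hxB')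
      rw [Finset.mem_sup]
      exact ⟨B', Finset.mem_erase.mpr ⟨hne, hB'P⟩, hxB'⟩

lemma B_not_mem {P' : Finset (Finset (Fin n))} {S B : Finset (Fin n)}
    (hBne : B.Nonempty) (hP' : IsPartitionOf P' (S \ B)) : B ∉ P' := by
  intro hmem
  have h1 : B ⊆ S \ B := block_subset hP' hmem
  obtain ⟨x, hx⟩ := hBne
  exact (Finset.mem_sdiff.mp (h1 hx)).2 hx

/-- partition identity for `phiHat`. -/
lemma phiHat_partition (v : Fin n → Fin n → ℝ) (hv : Symm v) :
    ∀ (S : Finset (Fin n)),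
    ∑ P ∈ Finset.univ.filter (fun P : Finset (Finset (Fin n)) => IsPartitionOf P S),
      ∏ B ∈ P, phiHat v B = rho S v := by
  suffices H : ∀ (q : ℕ) (S : Finset (Fin n)), S.card = q →
      ∑ P ∈ Finset.univ.filter (fun P : Finset (Finset (Fin n)) => IsPartitionOf P S),
        ∏ B ∈ P, phiHat v B = rho S v by
    intro S; exact H S.card S rfl
  intro q
  induction q using Nat.strong_induction_on with
  | _ q IH =>
  intro S hcard
  rcases Finset.eq_empty_or_nonempty S with rfl | hSne
  · have hfil : Finset.univ.filter
        (fun P : Finset (Finset (Fin n)) => IsPartitionOf P (∅ : Finset (Fin n))) = {∅} := by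
      ext P
      simp only [Finset.mem_filter, Finset.mem_univ, true_and, Finset.mem_singleton]
      constructor
      · intro hP
        rcases Finset.eq_empty_or_nonempty P with rfl | ⟨B, hB⟩
        · rfl
        · exfalso
          have h1 := hP.1 B hB
          have h2 : B ⊆ ∅ := block_subset hP hB
          simp [Finset.subset_empty.mp h2] at h1
      · rintro rfl
        exact ⟨by simp, by simp, by simp⟩
    rw [hfil, Finset.sum_singleton, Finset.prod_empty]
    simp [rho]
  · set r := S.min' hSne with hrdef
    have hrS : r ∈ S := S.min'_mem hSne
    set Part : Finset (Fin n) → Finset (Finset (Finset (Fin n))) :=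
      fun S' => Finset.univ.filter
        (fun P : Finset (Finset (Fin n)) => IsPartitionOf P S') with hPart
    -- Step 1: insert the singleton-filter sum
    have step1 : ∑ P ∈ Part S, ∏ B ∈ P, phiHat v B
        = ∑ P ∈ Part S, ∑ B ∈ P.filter (fun B => r ∈ B),
            phiHat v B * ∏ B' ∈ P.erase B, phiHat v B' := by
      apply Finset.sum_congr rfl
      intro P hP
      have hPp : IsPartitionOf P S := (Finset.mem_filter.mp hP).2
      obtain ⟨B₀, ⟨hB₀P, hrB₀⟩, hun⟩ := exists_unique_block hPp hrS
      have hsingle : P.filter (fun B => r ∈ B) = {B₀} := by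
        ext B
        simp only [Finset.mem_filter, Finset.mem_singleton]
        constructor
        · rintro ⟨h1, h2⟩; exact hun B ⟨h1, h2⟩
        · rintro rfl; exact ⟨hB₀P, hrB₀⟩
      rw [hsingle, Finset.sum_singleton, Finset.mul_prod_erase _ _ hB₀P]
    -- Step 2: swap the sums
    have step2 : ∑ P ∈ Part S, ∑ B ∈ P.filter (fun B => r ∈ B),
            phiHat v B * ∏ B' ∈ P.erase B, phiHat v B'
        = ∑ B ∈ S.powerset.filter (fun B => r ∈ B),
            ∑ P ∈ (Part S).filter (fun P => B ∈ P),
              phiHat v B * ∏ B' ∈ P.erase B, phiHat v B' := by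
      apply Finset.sum_comm'
      intro P B
      simp only [hPart, Finset.mem_filter, Finset.mem_univ, true_and, Finset.mem_powerset]
      constructor
      · rintro ⟨hPp, hBP, hrB⟩
        exact ⟨⟨hPp, hBP⟩, block_subset hPp hBP, hrB⟩
      · rintro ⟨⟨hPp, hBP⟩, hBS, hrB⟩
        exact ⟨hPp, hBP, hrB⟩
    -- Step 3: inner bijection  P ↦ P.erase B
    have step3 : ∀ B ∈ S.powerset.filter (fun B => r ∈ B),
        ∑ P ∈ (Part S).filter (fun P => B ∈ P),
            phiHat v B * ∏ B' ∈ P.erase B, phiHat v B'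
        = phiHat v B * rho (S \ B) v := by
      intro B hB
      obtain ⟨hBS, hrB⟩ := Finset.mem_filter.mp hB
      rw [Finset.mem_powerset] at hBS
      have hBne : B.Nonempty := ⟨r, hrB⟩
      have hbij : ∑ P ∈ (Part S).filter (fun P => B ∈ P),
            phiHat v B * ∏ B' ∈ P.erase B, phiHat v B'
          = ∑ P' ∈ Part (S \ B), phiHat v B * ∏ B' ∈ P', phiHat v B' := by
        apply Finset.sum_nbij' (i := fun P => P.erase B) (j := fun P' => insert B P')
        · intro P hP
          simp only [hPart, Finset.mem_filter, Finset.mem_univ, true_and] at hP ⊢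
          exact isPartition_erase hP.1 hP.2
        · intro P' hP'
          simp only [hPart, Finset.mem_filter, Finset.mem_univ, true_and] at hP' ⊢
          exact ⟨isPartition_insert hBS hBne hP', Finset.mem_insert_self _ _⟩
        · intro P hP
          simp only [hPart, Finset.mem_filter, Finset.mem_univ, true_and] at hP
          exact Finset.insert_erase hP.2
        · intro P' hP'
          simp only [hPart, Finset.mem_filter, Finset.mem_univ, true_and] at hP'
          exact Finset.erase_insert (B_not_mem hBne hP')
        · intro P hP
          rfl
      rw [hbij, ← Finset.mul_sum]
      congr 1
      have hlt : (S \ B).card < q := by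
        rw [← hcard]
        exact Finset.card_lt_card (Finset.sdiff_ssubset hBS hBne)
      exact IH _ hlt (S \ B) rfl
    -- Step 4: identify phiHat with K and apply G_identity
    have step4 : ∀ B ∈ S.powerset.filter (fun B => r ∈ B),
        phiHat v B = K {r} B v := by
      intro B hB
      obtain ⟨hBS, hrB⟩ := Finset.mem_filter.mp hB
      rw [Finset.mem_powerset] at hBS
      have hBne : B.Nonempty := ⟨r, hrB⟩
      have hmin : B.min' hBne = r := by
        apply le_antisymm (B.min'_le _ hrB)
        exact S.min'_le _ (hBS (B.min'_mem hBne))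
      rw [phiHat, dif_pos hBne, hmin]
    have hGid := G_identity (S \ {r}).card {r} S (Finset.singleton_nonempty r)
      (Finset.singleton_subset_iff.mpr hrS) rfl v hv
    have hfil : S.powerset.filter (fun B => ({r} : Finset (Fin n)) ⊆ B)
        = S.powerset.filter (fun B => r ∈ B) := by
      apply Finset.filter_congr
      intro B _
      simp [Finset.singleton_subset_iff]
    rw [hfil] at hGid
    rw [step1, step2, Finset.sum_congr rfl step3, Finset.sum_congr rfl
      (fun B hB => by rw [step4 B hB]), ← hGid]
end UrsellProofAux

namespace UrsellProofAux
variable {n : ℕ}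

lemma Phi_unique (v : Fin n → Fin n → ℝ) (hv : Symm v) (Φ : Finset (Fin n) → ℝ)
    (h1 : ∀ j : Fin n, Φ {j} = Real.exp (-(v j j)))
    (h2 : ∀ Y : Finset (Fin n), 2 ≤ Y.card →
      rho Y v = ∑ P ∈ Finset.univ.filter
        (fun P : Finset (Finset (Fin n)) => IsPartitionOf P Y), ∏ B ∈ P, Φ B) :
    ∀ Y : Finset (Fin n), Y.Nonempty → Φ Y = phiHat v Y := by
  suffices H : ∀ (q : ℕ) (Y : Finset (Fin n)), Y.card = q → Y.Nonempty → Φ Y = phiHat v Y by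
    intro Y hY; exact H Y.card Y rfl hY
  intro q
  induction q using Nat.strong_induction_on with
  | _ q IH =>
  intro Y hcard hYne
  by_cases hq1 : Y.card ≤ 1
  · -- singleton case
    have h01 : Y.card = 1 := le_antisymm hq1 (Finset.card_pos.mpr hYne)
    obtain ⟨j, rfl⟩ := Finset.card_eq_one.mp h01
    rw [h1 j, phiHat, dif_pos (Finset.singleton_nonempty j)]
    rw [K_of_subset (by rw [Finset.min'_singleton])]
    rw [Finset.min'_singleton]
    simp
  · push_neg at hq1
    have h2Y : 2 ≤ Y.card := hq1
    have hYp : IsPartitionOf ({Y} : Finset (Finset (Fin n))) Y := by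
      refine ⟨fun B hB => ?_, ?_, ?_⟩
      · rw [Finset.mem_singleton] at hB; subst hB; exact hYne
      · simp
      · simp
    have hYmem : ({Y} : Finset (Finset (Fin n))) ∈ Finset.univ.filter
        (fun P : Finset (Finset (Fin n)) => IsPartitionOf P Y) :=
      Finset.mem_filter.mpr ⟨Finset.mem_univ _, hYp⟩
    have hblocks : ∀ P ∈ (Finset.univ.filter
        (fun P : Finset (Finset (Fin n)) => IsPartitionOf P Y)).erase
          ({Y} : Finset (Finset (Fin n))),
        ∀ B ∈ P, B ⊂ Y := by
      intro P hP B hBP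
      obtain ⟨hPne, hPf⟩ := Finset.mem_erase.mp hP
      have hPp : IsPartitionOf P Y := (Finset.mem_filter.mp hPf).2
      have hBS : B ⊆ Y := block_subset hPp hBP
      refine Finset.ssubset_iff_subset_ne.mpr ⟨hBS, ?_⟩
      intro hBY
      subst hBY
      apply hPne
      ext B'
      rw [Finset.mem_singleton]
      constructor
      · intro hB'P
        by_contra hne
        have hd := hPp.2.1 hB'P hBP hne
        obtain ⟨x, hx⟩ := hPp.1 B' hB'P
        exact (Finset.disjoint_left.mp hd) hx (block_subset hPp hB'P hx)
      · rintro rfl; exact hBP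
    have hsame : ∀ P ∈ (Finset.univ.filter
        (fun P : Finset (Finset (Fin n)) => IsPartitionOf P Y)).erase
          ({Y} : Finset (Finset (Fin n))),
        ∏ B ∈ P, Φ B = ∏ B ∈ P, phiHat v B := by
      intro P hP
      apply Finset.prod_congr rfl
      intro B hBP
      have hBss := hblocks P hP B hBP
      have hPp : IsPartitionOf P Y := (Finset.mem_filter.mp (Finset.mem_of_mem_erase hP)).2
      exact IH B.card (hcard ▸ Finset.card_lt_card hBss) B rfl (hPp.1 B hBP)
    have e1 := h2 Y h2Y
    have e2 := (phiHat_partition v hv Y).symm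
    rw [← Finset.add_sum_erase _ _ hYmem, Finset.prod_singleton] at e1 e2
    rw [Finset.sum_congr rfl hsame] at e1
    rw [e1] at e2
    linarith
end UrsellProofAux

namespace UrsellProofAux
variable {n : ℕ}

lemma pos_sig {v : Fin n → Fin n → ℝ} (hPos : Pos v) (A : Finset (Fin n)) {s : ℝ}
    (hs0 : 0 ≤ s) (hs1 : s ≤ 1) : Pos (sig A s v) := by
  intro t
  set t1 : Fin n → ℝ := fun i => if i ∈ A then t i else 0 with ht1
  set t2 : Fin n → ℝ := fun i => if i ∈ A then 0 else t i with ht2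
  have hpoint : ∀ i j : Fin n, t i * t j * sig A s v i j
      = s * (t i * t j * v i j)
        + (1 - s) * ((t1 i * t1 j * v i j) + (t2 i * t2 j * v i j)) := by
    intro i j
    simp only [sig, ht1, ht2]
    by_cases h1 : i ∈ A <;> by_cases h2 : j ∈ A <;>
      simp only [h1, h2, if_true, if_false, iff_true, iff_false, not_true, not_false_iff] <;>
      ring_nf <;> simp [h1, h2] <;> ring
  have hsum : ∑ i : Fin n, ∑ j : Fin n, t i * t j * sig A s v i j
      = s * (∑ i : Fin n, ∑ j : Fin n, t i * t j * v i j)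
        + (1 - s) * ((∑ i : Fin n, ∑ j : Fin n, t1 i * t1 j * v i j)
          + (∑ i : Fin n, ∑ j : Fin n, t2 i * t2 j * v i j)) := by
    simp only [Finset.mul_sum, ← Finset.sum_add_distrib]
    exact Finset.sum_congr rfl fun i _ => Finset.sum_congr rfl fun j _ => hpoint i j
  rw [hsum]
  have h1 := hPos t
  have h2 := hPos t1
  have h3 := hPos t2
  have hs' : (0:ℝ) ≤ 1 - s := by linarith
  positivity
lemma pos_diag_sum {v : Fin n → Fin n → ℝ} (hPos : Pos v) (A : Finset (Fin n)) :
    0 ≤ ∑ i ∈ A, ∑ j ∈ A, v i j := by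
  have := hPos (fun i => if i ∈ A then 1 else 0)
  have he : ∑ i : Fin n, ∑ j : Fin n,
      (if i ∈ A then (1:ℝ) else 0) * (if j ∈ A then (1:ℝ) else 0) * v i j
      = ∑ i ∈ A, ∑ j ∈ A, v i j := by
    rw [← Finset.sum_subset (Finset.subset_univ A)]
    · apply Finset.sum_congr rfl
      intro i hi
      rw [← Finset.sum_subset (Finset.subset_univ A)]
      · exact Finset.sum_congr rfl fun j hj => by simp [hi, hj]
      · intro j _ hj; simp [hj]
    · intro i _ hi
      apply Finset.sum_eq_zero
      intro j _; simp [hi]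
  rw [he] at this
  exact this

/-- The bound functional. -/
noncomputable def PB (u : Fin n → Fin n → ℝ) (A B : Finset (Fin n)) (t : Fin n → ℝ) : ℝ :=
  if h : B ⊆ A then 1
  else ∑ i ∈ A, ∑ j ∈ (B \ A).attach,
    (2 * t i * |u i j.1|) * ∫ s in (0:ℝ)..1,
      PB u (insert j.1 A) B (fun m => if m ∈ A then s * t m else 1)
termination_by (B \ A).card
decreasing_by
  have hj' : j.1 ∈ B \ A := j.2
  have he : B \ insert j.1 A = (B \ A).erase j.1 := by
    ext k; simp only [Finset.mem_sdiff, Finset.mem_erase, Finset.mem_insert]; tauto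
  rw [he]
  exact Finset.card_erase_lt_of_mem hj'

lemma PB_of_subset {A B : Finset (Fin n)} (h : B ⊆ A) (u : Fin n → Fin n → ℝ)
    (t : Fin n → ℝ) : PB u A B t = 1 := by
  rw [PB]; simp [h]

lemma PB_of_not_subset {A B : Finset (Fin n)} (h : ¬ B ⊆ A) (u : Fin n → Fin n → ℝ)
    (t : Fin n → ℝ) : PB u A B t = ∑ i ∈ A, ∑ j ∈ B \ A,
    (2 * t i * |u i j|) * ∫ s in (0:ℝ)..1,
      PB u (insert j A) B (fun m => if m ∈ A then s * t m else 1) := by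
  rw [PB, dif_neg h]
  exact Finset.sum_congr rfl fun i _ =>
    Finset.sum_attach (B \ A) (fun j => (2 * t i * |u i j|) * ∫ s in (0:ℝ)..1,
      PB u (insert j A) B (fun m => if m ∈ A then s * t m else 1))

lemma PB_continuous_aux : ∀ q : ℕ, ∀ (u : Fin n → Fin n → ℝ) (A B : Finset (Fin n)),
    (B \ A).card = q → Continuous (fun t : Fin n → ℝ => PB u A B t) := by
  intro q
  induction q using Nat.strong_induction_on with
  | _ q IH =>
  intro u A B hq
  by_cases h : B ⊆ A
  · simp_rw [PB_of_subset h]; exact continuous_const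
  · simp_rw [PB_of_not_subset h]
    apply continuous_finset_sum _ fun i _ => continuous_finset_sum _ fun j hj => ?_
    have hj' : j ∈ B \ A := hj
    have hcard : (B \ insert j A).card < q := by
      have he : B \ insert j A = (B \ A).erase j := by
        ext k; simp only [Finset.mem_sdiff, Finset.mem_erase, Finset.mem_insert]; tauto
      rw [← hq, he]
      exact Finset.card_erase_lt_of_mem hj'
    have hmap : Continuous (fun p : (Fin n → ℝ) × ℝ =>
        (fun m => if m ∈ A then p.2 * p.1 m else 1 : Fin n → ℝ)) := by
      apply continuous_pi
      intro m
      by_cases hm : m ∈ A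
      · simp only [hm, if_true]
        exact continuous_snd.mul ((continuous_apply m).comp continuous_fst)
      · simp only [hm, if_false]; exact continuous_const
    have hInt : Continuous fun t : Fin n → ℝ =>
        ∫ s in (0:ℝ)..1, PB u (insert j A) B (fun m => if m ∈ A then s * t m else 1) := by
      apply intervalIntegral.continuous_parametric_intervalIntegral_of_continuous'
      show Continuous (Function.uncurry fun (t : Fin n → ℝ) (s : ℝ) =>
        PB u (insert j A) B (fun m => if m ∈ A then s * t m else 1))
      exact (IH _ hcard u (insert j A) B rfl).comp hmap
    exact ((continuous_const.mul (continuous_apply i)).mul continuous_const).mul hInt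

lemma PB_continuous (u : Fin n → Fin n → ℝ) (A B : Finset (Fin n)) :
    Continuous (fun t : Fin n → ℝ => PB u A B t) := PB_continuous_aux _ u A B rfl

lemma PB_cont_s (u : Fin n → Fin n → ℝ) (A A' B : Finset (Fin n)) (t : Fin n → ℝ) :
    Continuous (fun s : ℝ => PB u A' B (fun m => if m ∈ A then s * t m else 1)) := by
  apply (PB_continuous u A' B).comp
  apply continuous_pi
  intro m
  by_cases hm : m ∈ A
  · simp only [hm, if_true]; exact continuous_id.mul continuous_const
  · simp only [hm, if_false]; exact continuous_const

lemma PB_nonneg : ∀ q : ℕ, ∀ (u : Fin n → Fin n → ℝ) (A B : Finset (Fin n))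
    (t : Fin n → ℝ), (B \ A).card = q → (∀ m, 0 ≤ t m) → 0 ≤ PB u A B t := by
  intro q
  induction q using Nat.strong_induction_on with
  | _ q IH =>
  intro u A B t hq ht
  by_cases h : B ⊆ A
  · rw [PB_of_subset h]; norm_num
  · rw [PB_of_not_subset h]
    apply Finset.sum_nonneg; intro i _
    apply Finset.sum_nonneg; intro j hj
    have hcard : (B \ insert j A).card < q := by
      have he : B \ insert j A = (B \ A).erase j := by
        ext k; simp only [Finset.mem_sdiff, Finset.mem_erase, Finset.mem_insert]; tauto
      rw [← hq, he]
      exact Finset.card_erase_lt_of_mem hj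
    apply mul_nonneg
    · have := ht i; positivity
    · apply intervalIntegral.integral_nonneg (by norm_num)
      intro s hs
      exact IH _ hcard u (insert j A) B _ rfl
        (fun m => by by_cases hm : m ∈ A <;>
          simp [hm, mul_nonneg hs.1 (ht m)])

/-- Main pointwise bound: `|K| ≤ PB`. -/
lemma K_le_PB : ∀ q : ℕ, ∀ (v u : Fin n → Fin n → ℝ) (A B : Finset (Fin n))
    (t : Fin n → ℝ), (B \ A).card = q → A ⊆ B → Pos v → (∀ m, 0 ≤ t m) →
    (∀ i ∈ B, ∀ j ∈ B, ¬(i ∈ A ∧ j ∈ A) →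
      v i j = (if i ∈ A then t i else 1) * (if j ∈ A then t j else 1) * u i j) →
    |K A B v| ≤ PB u A B t := by
  intro q
  induction q using Nat.strong_induction_on with
  | _ q IH =>
  intro v u A B t hq hAB hPos ht hmatch
  by_cases h : B ⊆ A
  · rw [K_of_subset h, PB_of_subset h, abs_of_pos (Real.exp_pos _)]
    rw [Real.exp_le_one_iff, neg_nonpos]
    exact pos_diag_sum hPos A
  · rw [K_of_not_subset h, PB_of_not_subset h]
    refine (Finset.abs_sum_le_sum_abs _ _).trans ?_
    apply Finset.sum_le_sum
    intro i hi
    refine (Finset.abs_sum_le_sum_abs _ _).trans ?_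
    apply Finset.sum_le_sum
    intro j hj
    obtain ⟨hjB, hjA⟩ := Finset.mem_sdiff.mp hj
    have hiB : i ∈ B := hAB hi
    have hvij : v i j = t i * u i j := by
      rw [hmatch i hiB j hjB (fun hand => hjA hand.2)]
      simp [hi, hjA]
    have hcard : (B \ insert j A).card < q := by
      have he : B \ insert j A = (B \ A).erase j := by
        ext k; simp only [Finset.mem_sdiff, Finset.mem_erase, Finset.mem_insert]; tauto
      rw [← hq, he]
      exact Finset.card_erase_lt_of_mem hj
    rw [abs_mul]
    have h1 : |(-2 : ℝ) * v i j| = 2 * t i * |u i j| := by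
      rw [hvij, abs_mul, abs_mul, abs_neg, abs_two, abs_of_nonneg (ht i)]
      ring
    rw [h1]
    apply mul_le_mul_of_nonneg_left _ (by have := ht i; positivity)
    -- |∫ K'| ≤ ∫ PB'
    have hKcont := K_cont_in_s A (insert j A) B v
    have hPBcont := PB_cont_s u A (insert j A) B t
    calc |∫ s in (0:ℝ)..1, K (insert j A) B (sig A s v)|
        ≤ ∫ s in (0:ℝ)..1, |K (insert j A) B (sig A s v)| :=
          intervalIntegral.abs_integral_le_integral_abs (by norm_num)
      _ ≤ ∫ s in (0:ℝ)..1,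
            PB u (insert j A) B (fun m => if m ∈ A then s * t m else 1) := by
          apply intervalIntegral.integral_mono_on (by norm_num)
            (hKcont.abs.intervalIntegrable _ _) (hPBcont.intervalIntegrable _ _)
          intro s hs
          apply IH _ hcard (sig A s v) u (insert j A) B _ rfl
            (Finset.insert_subset hjB hAB) (pos_sig hPos A hs.1 hs.2) ?ht ?hmatch
          case ht =>
            intro m
            by_cases hm : m ∈ A <;> simp [hm, mul_nonneg hs.1 (ht m)]
          case hmatch =>
            intro i' hi' j' hj' hnot
            have hnotA : ¬(i' ∈ A ∧ j' ∈ A) := by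
              intro hand
              exact hnot ⟨Finset.mem_insert_of_mem hand.1, Finset.mem_insert_of_mem hand.2⟩
            have hbase := hmatch i' hi' j' hj' hnotA
            have htb' : ∀ m : Fin n,
                (if m ∈ insert j A then (if m ∈ A then s * t m else 1) else 1)
                  = (if m ∈ A then s * t m else 1) := by
              intro m
              by_cases hm : m ∈ A
              · simp [hm, Finset.mem_insert_of_mem hm]
              · by_cases hm' : m ∈ insert j A <;> simp [hm, hm']
            rw [htb' i', htb' j']
            by_cases hc1 : i' ∈ A <;> by_cases hc2 : j' ∈ A
            · exact absurd ⟨hc1, hc2⟩ hnotA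
            · have hsig : sig A s v i' j' = s * v i' j' := by simp [sig, hc1, hc2]
              rw [hsig, hbase]; simp [hc1, hc2]; ring
            · have hsig : sig A s v i' j' = s * v i' j' := by simp [sig, hc1, hc2]
              rw [hsig, hbase]; simp [hc1, hc2]; ring
            · have hsig : sig A s v i' j' = v i' j' := by simp [sig, hc1, hc2]
              rw [hsig, hbase]; simp [hc1, hc2]

end UrsellProofAux

namespace UrsellProofAux
variable {n : ℕ}

lemma exp_int (T : ℝ) : T * ∫ s in (0:ℝ)..1, Real.exp (s * T) = Real.exp T - 1 := by
  rcases eq_or_ne T 0 with rfl | hT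
  · simp
  · have h1 : ∫ s in (0:ℝ)..1, Real.exp (s * T) = T⁻¹ * (Real.exp T - 1) := by
      rw [intervalIntegral.integral_comp_mul_right Real.exp hT]
      rw [zero_mul, one_mul, integral_exp, Real.exp_zero, smul_eq_mul]
    rw [h1]
    field_simp

lemma sum_PB_le {Λ : Type} [Fintype Λ] (g : Λ → Λ → ℝ) (α : Fin n → ℝ) (κ2 : ℝ)
    (hκ2 : 0 ≤ κ2)
    (hG : ∀ (i j : Fin n) (b : Λ), ∑ c : Λ, |α i * α j * g b c| ≤ κ2) :
    ∀ q : ℕ, ∀ A B : Finset (Fin n), A ⊆ B → (B \ A).card = q →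
    ∀ t : Fin n → ℝ, (∀ m, 0 ≤ t m) → ∀ y : Fin n → Λ,
    ∑ x ∈ Finset.univ.filter (fun x : Fin n → Λ => ∀ m, m ∉ B \ A → x m = y m),
      PB (fun i j => α i * α j * g (x i) (x j)) A B t
    ≤ (2*κ2)^q * (Nat.factorial q : ℝ) * (Real.exp 1)^q * Real.exp (∑ m ∈ A, t m) := by
  intro q
  induction q using Nat.strong_induction_on with
  | _ q IH =>
  intro A B hAB hq t ht y
  have hT0 : 0 ≤ ∑ m ∈ A, t m := Finset.sum_nonneg fun m _ => ht m
  by_cases hBA : B ⊆ A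
  · have hempty : B \ A = ∅ := Finset.sdiff_eq_empty_iff_subset.mpr hBA
    have hq0 : q = 0 := by rw [← hq, hempty]; rfl
    subst hq0
    have hfil : Finset.univ.filter (fun x : Fin n → Λ => ∀ m, m ∉ B \ A → x m = y m)
        = {y} := by
      ext x
      simp only [Finset.mem_filter, Finset.mem_univ, true_and, Finset.mem_singleton, hempty,
        Finset.notMem_empty, not_false_iff, forall_true_left, not_false_eq_true, forall_const]
      constructor
      · intro h; funext m; exact h m
      · rintro rfl; intro m; rfl
    rw [hfil, Finset.sum_singleton, PB_of_subset hBA]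
    simp only [pow_zero, Nat.factorial_zero, Nat.cast_one, one_mul, mul_one]
    exact Real.one_le_exp hT0
  · -- main case
    obtain ⟨q', rfl⟩ : ∃ q', q = q' + 1 := by
      have hne : (B \ A).Nonempty := by
        rw [Finset.sdiff_nonempty]; exact hBA
      rcases Nat.exists_eq_succ_of_ne_zero (hq ▸ Finset.card_ne_zero.mpr hne) with ⟨q', h⟩
      exact ⟨q', h⟩
    set T := ∑ m ∈ A, t m with hTdef
    set Cq : ℝ := (2*κ2)^q' * (Nat.factorial q' : ℝ) * (Real.exp 1)^q' with hCq
    have hCq0 : 0 ≤ Cq := by positivity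
    set Ibound : ℝ := ∫ s in (0:ℝ)..1, Cq * Real.exp (1 + s * T) with hIb
    have hIb0 : 0 ≤ Ibound := by
      apply intervalIntegral.integral_nonneg (by norm_num)
      intro s _; positivity
    have step0 : ∑ x ∈ Finset.univ.filter
          (fun x : Fin n → Λ => ∀ m, m ∉ B \ A → x m = y m),
        PB (fun i j => α i * α j * g (x i) (x j)) A B t
      = ∑ i ∈ A, ∑ j ∈ B \ A, ∑ x ∈ Finset.univ.filter
          (fun x : Fin n → Λ => ∀ m, m ∉ B \ A → x m = y m),
          (2 * t i * |α i * α j * g (x i) (x j)|) *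
            ∫ s in (0:ℝ)..1, PB (fun i' j' => α i' * α j' * g (x i') (x j')) (insert j A) B
              (fun m => if m ∈ A then s * t m else 1) := by
      rw [Finset.sum_congr rfl (fun x _ => PB_of_not_subset hBA _ t)]
      rw [Finset.sum_comm]
      exact Finset.sum_congr rfl fun i _ => Finset.sum_comm
    rw [step0]
    have hterm : ∀ i ∈ A, ∀ j ∈ B \ A,
        ∑ x ∈ Finset.univ.filter
          (fun x : Fin n → Λ => ∀ m, m ∉ B \ A → x m = y m),
          (2 * t i * |α i * α j * g (x i) (x j)|) *
            ∫ s in (0:ℝ)..1, PB (fun i' j' => α i' * α j' * g (x i') (x j')) (insert j A) B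
              (fun m => if m ∈ A then s * t m else 1)
        ≤ 2 * t i * κ2 * Ibound := by
      intro i hi j hj
      obtain ⟨hjB, hjA⟩ := Finset.mem_sdiff.mp hj
      have hij : i ≠ j := fun h => hjA (h ▸ hi)
      have hBA' : B \ insert j A = (B \ A).erase j := by
        ext k; simp only [Finset.mem_sdiff, Finset.mem_erase, Finset.mem_insert]; tauto
      have hcard' : (B \ insert j A).card = q' := by
        rw [hBA', Finset.card_erase_of_mem hj, hq]
        omega
      rw [← Finset.sum_fiberwise_of_maps_to (g := fun x : Fin n → Λ => x j)
        (t := (Finset.univ : Finset Λ)) (fun x _ => Finset.mem_univ _)]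
      have hfib : ∀ c : Λ,
          (Finset.univ.filter
            (fun x : Fin n → Λ => ∀ m, m ∉ B \ A → x m = y m)).filter
              (fun x => x j = c)
          = Finset.univ.filter (fun x : Fin n → Λ =>
              ∀ m, m ∉ B \ insert j A → x m = Function.update y j c m) := by
        intro c
        ext x
        simp only [Finset.mem_filter, Finset.mem_univ, true_and, hBA']
        constructor
        · rintro ⟨h1, h2⟩ m hm
          by_cases hmj : m = j
          · subst hmj; rw [h2, Function.update_self]
          · have hmBA : m ∉ B \ A := by
              intro hmem
              exact hm (Finset.mem_erase.mpr ⟨hmj, hmem⟩)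
            rw [h1 m hmBA, Function.update_of_ne hmj]
        · intro h
          have h2 : x j = c := by
            have := h j (fun hmem => (Finset.mem_erase.mp hmem).1 rfl)
            rwa [Function.update_self] at this
          refine ⟨?_, h2⟩
          intro m hm
          have hmj : m ≠ j := fun he => hm (he ▸ hj)
          have := h m (fun hmem => hm (Finset.mem_of_mem_erase hmem))
          rwa [Function.update_of_ne hmj] at this
      -- bound the inner sum for each fiber
      have hinner : ∀ c : Λ,
          ∑ x ∈ (Finset.univ.filter
            (fun x : Fin n → Λ => ∀ m, m ∉ B \ A → x m = y m)).filter
              (fun x => x j = c),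
          (2 * t i * |α i * α j * g (x i) (x j)|) *
            ∫ s in (0:ℝ)..1, PB (fun i' j' => α i' * α j' * g (x i') (x j')) (insert j A) B
              (fun m => if m ∈ A then s * t m else 1)
          ≤ (2 * t i * |α i * α j * g (y i) c|) * Ibound := by
        intro c
        rw [hfib c]
        have hxval : ∀ x ∈ Finset.univ.filter (fun x : Fin n → Λ =>
              ∀ m, m ∉ B \ insert j A → x m = Function.update y j c m),
            x i = y i ∧ x j = c := by
          intro x hx
          have hx' := (Finset.mem_filter.mp hx).2
          constructor
          · have hiA' : i ∉ B \ insert j A := by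
              intro hmem
              exact (Finset.mem_sdiff.mp hmem).2 (Finset.mem_insert_of_mem hi)
            rw [hx' i hiA', Function.update_of_ne hij]
          · have hjA' : j ∉ B \ insert j A := by
              intro hmem
              exact (Finset.mem_sdiff.mp hmem).2 (Finset.mem_insert_self j A)
            rw [hx' j hjA', Function.update_self]
        have hcongr : ∑ x ∈ Finset.univ.filter (fun x : Fin n → Λ =>
              ∀ m, m ∉ B \ insert j A → x m = Function.update y j c m),
            (2 * t i * |α i * α j * g (x i) (x j)|) *
              ∫ s in (0:ℝ)..1, PB (fun i' j' => α i' * α j' * g (x i') (x j')) (insert j A) B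
                (fun m => if m ∈ A then s * t m else 1)
            = (2 * t i * |α i * α j * g (y i) c|) *
              ∑ x ∈ Finset.univ.filter (fun x : Fin n → Λ =>
                ∀ m, m ∉ B \ insert j A → x m = Function.update y j c m),
                ∫ s in (0:ℝ)..1, PB (fun i' j' => α i' * α j' * g (x i') (x j'))
                  (insert j A) B (fun m => if m ∈ A then s * t m else 1) := by
          rw [Finset.mul_sum]
          apply Finset.sum_congr rfl
          intro x hx
          rw [(hxval x hx).1, (hxval x hx).2]
        rw [hcongr]
        have hK0 : 0 ≤ 2 * t i * |α i * α j * g (y i) c| := by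
          have := ht i; positivity
        apply mul_le_mul_of_nonneg_left _ hK0
        -- ∑_x ∫ PB ≤ Ibound
        have hswap : ∑ x ∈ Finset.univ.filter (fun x : Fin n → Λ =>
              ∀ m, m ∉ B \ insert j A → x m = Function.update y j c m),
              ∫ s in (0:ℝ)..1, PB (fun i' j' => α i' * α j' * g (x i') (x j'))
                (insert j A) B (fun m => if m ∈ A then s * t m else 1)
            = ∫ s in (0:ℝ)..1, ∑ x ∈ Finset.univ.filter (fun x : Fin n → Λ =>
              ∀ m, m ∉ B \ insert j A → x m = Function.update y j c m),
                PB (fun i' j' => α i' * α j' * g (x i') (x j'))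
                  (insert j A) B (fun m => if m ∈ A then s * t m else 1) :=
          (intervalIntegral.integral_finset_sum (fun x _ =>
            (PB_cont_s _ A (insert j A) B t).intervalIntegrable _ _)).symm
        rw [hswap]
        apply intervalIntegral.integral_mono_on (by norm_num)
          (Continuous.intervalIntegrable (continuous_finset_sum _ fun x _ =>
            PB_cont_s _ A (insert j A) B t) _ _)
          (Continuous.intervalIntegrable (by fun_prop) _ _)
        intro s hs
        have ht' : ∀ m : Fin n, 0 ≤ (fun m => if m ∈ A then s * t m else 1) m := by
          intro m
          by_cases hm : m ∈ A <;> simp [hm, mul_nonneg hs.1 (ht m)]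
        have hIH := IH q' (Nat.lt_succ_self q') (insert j A) B
          (Finset.insert_subset hjB hAB) hcard'
          (fun m => if m ∈ A then s * t m else 1) ht' (Function.update y j c)
        have hsum' : ∑ m ∈ insert j A, (if m ∈ A then s * t m else 1) = 1 + s * T := by
          rw [Finset.sum_insert hjA, if_neg hjA]
          congr 1
          rw [Finset.mul_sum]
          apply Finset.sum_congr rfl
          intro m hm
          rw [if_pos hm]
        rw [hsum'] at hIH
        exact hIH
      -- sum over fibers
      calc ∑ c : Λ, ∑ x ∈ (Finset.univ.filter
            (fun x : Fin n → Λ => ∀ m, m ∉ B \ A → x m = y m)).filter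
              (fun x => x j = c),
          (2 * t i * |α i * α j * g (x i) (x j)|) *
            ∫ s in (0:ℝ)..1, PB (fun i' j' => α i' * α j' * g (x i') (x j')) (insert j A) B
              (fun m => if m ∈ A then s * t m else 1)
          ≤ ∑ c : Λ, (2 * t i * |α i * α j * g (y i) c|) * Ibound :=
            Finset.sum_le_sum (fun c _ => hinner c)
        _ = (2 * t i) * (∑ c : Λ, |α i * α j * g (y i) c|) * Ibound := by
            rw [← Finset.sum_mul, ← Finset.mul_sum]
        _ ≤ 2 * t i * κ2 * Ibound := by
            apply mul_le_mul_of_nonneg_right _ hIb0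
            apply mul_le_mul_of_nonneg_left (hG i j (y i)) (by have := ht i; positivity)
    -- total
    calc ∑ i ∈ A, ∑ j ∈ B \ A, ∑ x ∈ Finset.univ.filter
          (fun x : Fin n → Λ => ∀ m, m ∉ B \ A → x m = y m),
          (2 * t i * |α i * α j * g (x i) (x j)|) *
            ∫ s in (0:ℝ)..1, PB (fun i' j' => α i' * α j' * g (x i') (x j')) (insert j A) B
              (fun m => if m ∈ A then s * t m else 1)
        ≤ ∑ i ∈ A, ∑ j ∈ B \ A, 2 * t i * κ2 * Ibound :=
          Finset.sum_le_sum (fun i hi => Finset.sum_le_sum (fun j hj => hterm i hi j hj))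
      _ = (q' + 1 : ℝ) * (2 * κ2) * T * Ibound := by
          have h1 : ∀ i ∈ A, ∑ j ∈ B \ A, 2 * t i * κ2 * Ibound
              = ((q' : ℝ) + 1) * 2 * κ2 * Ibound * t i := by
            intro i _
            rw [Finset.sum_const, hq, nsmul_eq_mul]
            push_cast; ring
          rw [Finset.sum_congr rfl h1, ← Finset.mul_sum, hTdef]
          ring
      _ ≤ (2*κ2)^(q'+1) * (Nat.factorial (q'+1) : ℝ) * (Real.exp 1)^(q'+1) * Real.exp T := by
          have hI0 : Ibound = Cq * Real.exp 1 * ∫ s in (0:ℝ)..1, Real.exp (s * T) := by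
            rw [hIb]
            have he : ∀ s : ℝ, Cq * Real.exp (1 + s * T)
                = (Cq * Real.exp 1) * Real.exp (s * T) := by
              intro s; rw [Real.exp_add]; ring
            rw [intervalIntegral.integral_congr (g := fun s =>
              (Cq * Real.exp 1) * Real.exp (s * T)) (fun s _ => he s)]
            rw [intervalIntegral.integral_const_mul]
          have harr : (q' + 1 : ℝ) * (2 * κ2) * T * Ibound
              = ((2*κ2)^(q'+1) * (Nat.factorial (q'+1) : ℝ) * (Real.exp 1)^(q'+1))
                * (T * ∫ s in (0:ℝ)..1, Real.exp (s * T)) := by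
            rw [hI0, hCq, pow_succ, pow_succ, Nat.factorial_succ]
            push_cast
            ring
          rw [harr, exp_int T]
          have hcoeff : 0 ≤ (2*κ2)^(q'+1) * (Nat.factorial (q'+1) : ℝ) * (Real.exp 1)^(q'+1) := by
            positivity
          nlinarith [Real.exp_pos T, hcoeff]
end UrsellProofAux

namespace UrsellProofAux
variable {n : ℕ}

lemma pos_uu {Λ : Type} [Fintype Λ] (g : Λ → Λ → ℝ)
    (hpsd : ∀ f : Λ → ℝ, 0 ≤ ∑ a : Λ, ∑ b : Λ, f a * f b * g a b)
    (α : Fin n → ℝ) (x : Fin n → Λ) :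
    Pos (fun i j => α i * α j * g (x i) (x j)) := by
  intro t
  set F : Λ → ℝ := fun a => ∑ i ∈ Finset.univ.filter (fun i : Fin n => x i = a), t i * α i
    with hF
  have key : ∑ a : Λ, ∑ b : Λ, F a * F b * g a b
      = ∑ i : Fin n, ∑ j : Fin n, t i * t j * (α i * α j * g (x i) (x j)) := by
    have h1 : ∀ a b : Λ, F a * F b * g a b
        = ∑ i ∈ Finset.univ.filter (fun i : Fin n => x i = a),
            ∑ j ∈ Finset.univ.filter (fun j : Fin n => x j = b),
              (t i * α i) * (t j * α j) * g a b := by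
      intro a b
      rw [hF, Finset.sum_mul_sum, Finset.sum_mul]
      apply Finset.sum_congr rfl; intro i _
      rw [Finset.sum_mul]
    calc ∑ a : Λ, ∑ b : Λ, F a * F b * g a b
        = ∑ a : Λ, ∑ i ∈ Finset.univ.filter (fun i : Fin n => x i = a),
            ∑ b : Λ, ∑ j ∈ Finset.univ.filter (fun j : Fin n => x j = b),
              (t i * α i) * (t j * α j) * g (x i) (x j) := by
          apply Finset.sum_congr rfl; intro a _
          rw [Finset.sum_congr rfl (fun b _ => h1 a b), Finset.sum_comm]
          apply Finset.sum_congr rfl; intro i hi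
          apply Finset.sum_congr rfl; intro b _
          apply Finset.sum_congr rfl; intro j hj
          rw [(Finset.mem_filter.mp hi).2, (Finset.mem_filter.mp hj).2]
      _ = ∑ i : Fin n, ∑ j : Fin n, (t i * α i) * (t j * α j) * g (x i) (x j) := by
          rw [Finset.sum_fiberwise_of_maps_to (g := fun i : Fin n => x i)
            (fun i _ => Finset.mem_univ (x i))]
          apply Finset.sum_congr rfl; intro i _
          rw [Finset.sum_fiberwise_of_maps_to (g := fun j : Fin n => x j)
            (fun j _ => Finset.mem_univ (x j))]
      _ = ∑ i : Fin n, ∑ j : Fin n, t i * t j * (α i * α j * g (x i) (x j)) := by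
          apply Finset.sum_congr rfl; intro i _
          apply Finset.sum_congr rfl; intro j _
          ring
  rw [← key]
  exact hpsd F

end UrsellProofAux

open scoped Classical in
/-- **Lemma 2.1 in abstract form.** There is an absolute constant `C > 0` such that for any
nonempty finite set `Λ`, any `a > 0`, any symmetric positive semidefinite kernel `g` on `Λ`
with `a^4 ⬝ max_x ∑_y |g x y| ≤ G`, any `n ≥ 2`, any charges `α_j` with `|α_j| ≤ ᾱ`, and
`Φ x` the Ursell functions of the positive semidefinite matrix `(α_j α_{j'} g (x j) (x j'))`,
one has `max_{x₁} a^{4(n-1)} ∑_{x₂,…,x_n} |Φ x univ| ≤ C^n n! (ᾱ² G)^{n-1}`. -/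
theorem ursell_kernel_bound :
    ∃ C : ℝ, 0 < C ∧
      ∀ (Λ : Type) [Fintype Λ] [Nonempty Λ] (a : ℝ), 0 < a →
      ∀ (g : Λ → Λ → ℝ), (∀ x y, g x y = g y x) →
        (∀ f : Λ → ℝ, 0 ≤ ∑ x : Λ, ∑ y : Λ, f x * f y * g x y) →
      ∀ (G : ℝ), (∀ x : Λ, a ^ 4 * ∑ y : Λ, |g x y| ≤ G) →
      ∀ (n : ℕ), ∀ hn : 2 ≤ n,
      ∀ (α : Fin n → ℝ) (ᾱ : ℝ), (∀ j, |α j| ≤ ᾱ) →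
      ∀ (Φ : (Fin n → Λ) → Finset (Fin n) → ℝ),
        (∀ (x : Fin n → Λ) (j : Fin n),
          Φ x {j} = Real.exp (-(α j * α j * g (x j) (x j)))) →
        (∀ (x : Fin n → Λ) (Y : Finset (Fin n)), 2 ≤ Y.card →
          Real.exp (-(∑ j ∈ Y, ∑ j' ∈ Y, α j * α j' * g (x j) (x j'))) =
            ∑ P ∈ Finset.univ.filter (fun P : Finset (Finset (Fin n)) => IsPartitionOf P Y),
              ∏ B ∈ P, Φ x B) →
      ∀ x₁ : Λ,
        a ^ (4 * (n - 1)) *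
            ∑ x ∈ Finset.univ.filter (fun x : Fin n → Λ => x ⟨0, by omega⟩ = x₁),
              |Φ x Finset.univ|
          ≤ C ^ n * (n.factorial : ℝ) * (ᾱ ^ 2 * G) ^ (n - 1) := by
  classical
  refine ⟨6, by norm_num, ?_⟩
  intro Λ _ _ a ha g hgsymm hpsd G hg n hn α ᾱ hα Φ hΦ1 hΦ2 x₁
  open UrsellProofAux in
  set r : Fin n := ⟨0, by omega⟩ with hrdef
  have ha4 : (0:ℝ) < a ^ 4 := by positivity
  have hᾱ0 : 0 ≤ ᾱ := le_trans (abs_nonneg _) (hα r)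
  have hG0 : 0 ≤ G := by
    obtain ⟨b⟩ := (inferInstance : Nonempty Λ)
    refine le_trans ?_ (hg b)
    have : 0 ≤ ∑ y : Λ, |g b y| := Finset.sum_nonneg fun y _ => abs_nonneg _
    positivity
  set κ2 : ℝ := ᾱ ^ 2 * G / a ^ 4 with hκ2def
  have hκ2 : 0 ≤ κ2 := by positivity
  have hGbound : ∀ (i j : Fin n) (b : Λ), ∑ c : Λ, |α i * α j * g b c| ≤ κ2 := by
    intro i j b
    have h1 : ∑ c : Λ, |α i * α j * g b c| = |α i| * |α j| * ∑ c : Λ, |g b c| := by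
      rw [Finset.mul_sum]
      apply Finset.sum_congr rfl; intro c _
      rw [abs_mul, abs_mul]
    rw [h1]
    have h2 : ∑ c : Λ, |g b c| ≤ G / a ^ 4 := by
      rw [le_div_iff₀ ha4]
      calc (∑ c : Λ, |g b c|) * a ^ 4 = a ^ 4 * ∑ c : Λ, |g b c| := by ring
        _ ≤ G := hg b
    have h3 : |α i| * |α j| ≤ ᾱ ^ 2 := by
      rw [sq]
      exact mul_le_mul (hα i) (hα j) (abs_nonneg _) hᾱ0
    calc |α i| * |α j| * ∑ c : Λ, |g b c|
        ≤ ᾱ ^ 2 * (G / a ^ 4) := by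
          apply mul_le_mul h3 h2 (Finset.sum_nonneg fun c _ => abs_nonneg _) (by positivity)
      _ = κ2 := by rw [hκ2def, mul_div_assoc]
  -- for each configuration x identify Φ x univ with K
  have hid : ∀ x : Fin n → Λ,
      Φ x Finset.univ = K ({r} : Finset (Fin n)) Finset.univ
        (fun i j => α i * α j * g (x i) (x j)) := by
    intro x
    set v : Fin n → Fin n → ℝ := fun i j => α i * α j * g (x i) (x j) with hv
    have hvsymm : Symm v := by
      intro i j
      show α i * α j * g (x i) (x j) = α j * α i * g (x j) (x i)
      rw [hgsymm (x i) (x j)]; ring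
    have h1' : ∀ j : Fin n, Φ x {j} = Real.exp (-(v j j)) := fun j => hΦ1 x j
    have h2' : ∀ Y : Finset (Fin n), 2 ≤ Y.card →
        rho Y v = ∑ P ∈ Finset.univ.filter
          (fun P : Finset (Finset (Fin n)) => IsPartitionOf P Y), ∏ B ∈ P, Φ x B := by
      intro Y hY
      exact hΦ2 x Y hY
    have huniv : (Finset.univ : Finset (Fin n)).Nonempty := ⟨r, Finset.mem_univ r⟩
    have := Phi_unique v hvsymm (Φ x) h1' h2' Finset.univ huniv
    rw [this, phiHat, dif_pos huniv]
    congr 1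
    have : (Finset.univ : Finset (Fin n)).min' huniv = r := by
      apply le_antisymm (Finset.min'_le _ _ (Finset.mem_univ r))
      apply Finset.le_min'
      intro y _
      exact Fin.mk_le_of_le_val (Nat.zero_le _)
    rw [this]
  -- pointwise bound
  have hpoint : ∀ x : Fin n → Λ,
      |Φ x Finset.univ| ≤ PB (fun i j => α i * α j * g (x i) (x j))
        ({r} : Finset (Fin n)) Finset.univ (fun _ => 1) := by
    intro x
    rw [hid x]
    apply K_le_PB (Finset.univ \ {r}).card _ _ _ _ _ rfl (Finset.subset_univ _)
      (pos_uu g hpsd α x) (fun m => zero_le_one)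
    intro i _ j _ _
    by_cases h1 : i ∈ ({r} : Finset (Fin n)) <;>
      by_cases h2 : j ∈ ({r} : Finset (Fin n)) <;> simp [h1, h2]
  -- the filter sets agree
  have hfil : Finset.univ.filter (fun x : Fin n → Λ => x r = x₁)
      = Finset.univ.filter (fun x : Fin n → Λ =>
          ∀ m, m ∉ Finset.univ \ ({r} : Finset (Fin n)) → x m = (fun _ => x₁) m) := by
    ext x
    simp only [Finset.mem_filter, Finset.mem_univ, true_and, Finset.mem_sdiff,
      Finset.mem_singleton, not_and, not_not]
    constructor
    · intro h m hm
      rw [hm]; exact h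
    · intro h
      exact h r rfl
  -- sum bound
  have hcard : ((Finset.univ : Finset (Fin n)) \ {r}).card = n - 1 := by
    rw [Finset.card_sdiff_of_subset (Finset.singleton_subset_iff.mpr (Finset.mem_univ r))]
    simp
  have hsum : ∑ x ∈ Finset.univ.filter (fun x : Fin n → Λ => x r = x₁), |Φ x Finset.univ|
      ≤ (2*κ2)^(n-1) * ((n-1).factorial : ℝ) * (Real.exp 1)^(n-1) * Real.exp 1 := by
    calc ∑ x ∈ Finset.univ.filter (fun x : Fin n → Λ => x r = x₁), |Φ x Finset.univ|
        ≤ ∑ x ∈ Finset.univ.filter (fun x : Fin n → Λ => x r = x₁),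
            PB (fun i j => α i * α j * g (x i) (x j))
              ({r} : Finset (Fin n)) Finset.univ (fun _ => 1) :=
          Finset.sum_le_sum fun x _ => hpoint x
      _ ≤ (2*κ2)^(n-1) * ((n-1).factorial : ℝ) * (Real.exp 1)^(n-1)
            * Real.exp (∑ m ∈ ({r} : Finset (Fin n)), (1:ℝ)) := by
          rw [hfil]
          exact sum_PB_le g α κ2 hκ2 hGbound (n-1) {r} Finset.univ
            (Finset.subset_univ _) hcard (fun _ => 1) (fun _ => zero_le_one) (fun _ => x₁)
      _ = (2*κ2)^(n-1) * ((n-1).factorial : ℝ) * (Real.exp 1)^(n-1) * Real.exp 1 := by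
          norm_num
  -- final arithmetic
  have hmain : a ^ (4 * (n - 1)) *
      ((2*κ2)^(n-1) * ((n-1).factorial : ℝ) * (Real.exp 1)^(n-1) * Real.exp 1)
      ≤ 6 ^ n * (n.factorial : ℝ) * (ᾱ ^ 2 * G) ^ (n - 1) := by
    have hpow : a ^ (4 * (n - 1)) = (a ^ 4) ^ (n - 1) := by
      rw [← pow_mul]
    have hprod : (a ^ 4) ^ (n-1) * (2*κ2)^(n-1) = (2 * (ᾱ^2 * G))^(n-1) := by
      rw [← mul_pow]
      congr 1
      rw [hκ2def]
      field_simp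
    have hexp : (Real.exp 1)^(n-1) * Real.exp 1 = (Real.exp 1)^n := by
      rw [← pow_succ]
      congr 1
      omega
    have he3 : Real.exp 1 ≤ 3 := by
      have := Real.exp_one_lt_d9
      linarith
    have hfact : ((n-1).factorial : ℝ) ≤ (n.factorial : ℝ) := by
      exact_mod_cast Nat.factorial_le (by omega)
    calc a ^ (4 * (n - 1)) *
        ((2*κ2)^(n-1) * ((n-1).factorial : ℝ) * (Real.exp 1)^(n-1) * Real.exp 1)
        = ((a^4)^(n-1) * (2*κ2)^(n-1)) * ((n-1).factorial : ℝ)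
            * ((Real.exp 1)^(n-1) * Real.exp 1) := by
          rw [hpow]; ring
      _ = (2 * (ᾱ^2 * G))^(n-1) * ((n-1).factorial : ℝ) * (Real.exp 1)^n := by
          rw [hprod, hexp]
      _ = 2^(n-1) * (Real.exp 1)^n * ((n-1).factorial : ℝ) * (ᾱ^2*G)^(n-1) := by
          rw [mul_pow]; ring
      _ ≤ 2^n * 3^n * (n.factorial : ℝ) * (ᾱ^2*G)^(n-1) := by
          apply mul_le_mul_of_nonneg_right _ (by positivity)
          apply mul_le_mul _ hfact (by positivity) (by positivity)
          apply mul_le_mul _ _ (by positivity) (by positivity)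
          · exact pow_le_pow_right₀ one_le_two (by omega)
          · exact pow_le_pow_left₀ (Real.exp_pos 1).le he3 n
      _ = 6 ^ n * (n.factorial : ℝ) * (ᾱ^2*G)^(n-1) := by
          rw [show (6:ℝ)^n = 2^n * 3^n by rw [← mul_pow]; norm_num]
  -- put it together
  have hfinal := mul_le_mul_of_nonneg_left hsum (by positivity : (0:ℝ) ≤ a ^ (4*(n-1)))
  calc a ^ (4 * (n - 1)) *
        ∑ x ∈ Finset.univ.filter (fun x : Fin n → Λ => x ⟨0, by omega⟩ = x₁),
          |Φ x Finset.univ|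
      = a ^ (4 * (n - 1)) *
        ∑ x ∈ Finset.univ.filter (fun x : Fin n → Λ => x r = x₁), |Φ x Finset.univ| := rfl
    _ ≤ a ^ (4 * (n - 1)) *
        ((2*κ2)^(n-1) * ((n-1).factorial : ℝ) * (Real.exp 1)^(n-1) * Real.exp 1) := hfinal
    _ ≤ 6 ^ n * (n.factorial : ℝ) * (ᾱ ^ 2 * G) ^ (n - 1) := hmain
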